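/- arXiv:2512.16833 — 7 statements merged into one kernel-verified Lean document; each statement's English description precedes it below -/
import Mathlib

section
/- For every real number w with 0 < w < 1 and every real number t, |t|/(w·exp(t) + (1−w)·exp(−t))² ≤ 1/(4·(min{w, 1−w})²). -/
/-- Global bound on `f₂(t) = t·(w·eᵗ + (1−w)·e^{−t})^{−2}`:
for `w ∈ (0,1)` and all real `t`, `|f₂(t)| ≤ 1/(4·min{w,1−w}²)`. -/
theorem f2_global_bound (w t : ℝ) (hw0 : 0 < w) (hw1 : w < 1) :
    |t| / (w * Real.exp t + (1 - w) * Real.exp (-t)) ^ 2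
      ≤ 1 / (4 * (min w (1 - w)) ^ 2) := by
  set a := Real.exp t with ha'
  set b := Real.exp (-t) with hb'
  have ha : 0 < a := Real.exp_pos t
  have hb : 0 < b := Real.exp_pos (-t)
  have hw1' : 0 < 1 - w := by linarith
  have hm : 0 < min w (1 - w) := lt_min hw0 hw1'
  have hD : 0 < w * a + (1 - w) * b := by positivity
  have h1 : min w (1 - w) * (a + b) ≤ w * a + (1 - w) * b := by
    have h2 := min_le_left w (1 - w)
    have h3 := min_le_right w (1 - w)
    nlinarith
  have h4 : 4 * |t| ≤ (a + b) ^ 2 := by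
    have e1 := Real.add_one_le_exp t
    have e2 := Real.add_one_le_exp (-t)
    rcases abs_cases t with ⟨h, _⟩ | ⟨h, _⟩ <;> rw [h] <;>
      nlinarith [sq_nonneg (1 - t), sq_nonneg (1 + t), ha.le, hb.le]
  have hD2 : (min w (1 - w)) ^ 2 * (a + b) ^ 2 ≤ (w * a + (1 - w) * b) ^ 2 := by
    nlinarith [hm.le, mul_pos (add_pos ha hb) hm]
  rw [div_le_div_iff₀ (by positivity) (by positivity)]
  nlinarith [mul_le_mul_of_nonneg_left h4 (sq_nonneg (min w (1 - w)))]
end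

section
/- For every real number w with 0 < w < 1, every real number a ≥ 0, and every real number t with t ≥ a, t/(w·exp(t) + (1−w)·exp(−t))² ≤ exp(−3a/2)/(min{w, 1−w})². -/
/-- Tail bound on `f₂(t) = t·(w·eᵗ + (1−w)·e^{−t})^{−2}` over `[a, ∞)`:
for `w ∈ (0,1)`, `a ≥ 0` and `t ≥ a`, `f₂(t) ≤ exp(−3a/2)/(min{w,1−w})²`. -/
theorem f2_tail_bound (w a t : ℝ) (hw0 : 0 < w) (hw1 : w < 1)
    (ha : 0 ≤ a) (hta : a ≤ t) :
    t / (w * Real.exp t + (1 - w) * Real.exp (-t)) ^ 2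
      ≤ Real.exp (-3 * a / 2) / (min w (1 - w)) ^ 2 := by
  have ht : 0 ≤ t := ha.trans hta
  set m := min w (1 - w) with hm
  have hm0 : 0 < m := lt_min hw0 (by linarith)
  have hwm : m ≤ w := min_le_left _ _
  have hden : m * Real.exp t ≤ w * Real.exp t + (1 - w) * Real.exp (-t) := by
    have h1 : m * Real.exp t ≤ w * Real.exp t :=
      mul_le_mul_of_nonneg_right hwm (Real.exp_pos t).le
    have h2 : 0 ≤ (1 - w) * Real.exp (-t) :=
      mul_nonneg (by linarith) (Real.exp_pos _).le
    linarith
  have hpos : 0 < m * Real.exp t := mul_pos hm0 (Real.exp_pos t)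
  have hsq : (m * Real.exp t) ^ 2 ≤ (w * Real.exp t + (1 - w) * Real.exp (-t)) ^ 2 :=
    pow_le_pow_left₀ hpos.le hden 2
  have step1 : t / (w * Real.exp t + (1 - w) * Real.exp (-t)) ^ 2
      ≤ t / (m * Real.exp t) ^ 2 :=
    div_le_div_of_nonneg_left ht (pow_pos hpos 2) hsq
  -- t ≤ exp (t/2)
  have hhalf : Real.exp (t / 2) = Real.exp (t / 4) * Real.exp (t / 4) := by
    rw [← Real.exp_add]; ring_nf
  have hkey : t ≤ Real.exp (t / 2) := by
    have h4 := Real.add_one_le_exp (t / 4)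
    nlinarith [sq_nonneg (1 - t / 4), Real.exp_pos (t / 4)]
  have hte : t * Real.exp (-2 * t) ≤ Real.exp (-3 * a / 2) := by
    calc t * Real.exp (-2 * t) ≤ Real.exp (t / 2) * Real.exp (-2 * t) :=
          mul_le_mul_of_nonneg_right hkey (Real.exp_pos _).le
      _ = Real.exp (-3 * t / 2) := by rw [← Real.exp_add]; ring_nf
      _ ≤ Real.exp (-3 * a / 2) := Real.exp_le_exp.mpr (by linarith)
  have step2 : t / (m * Real.exp t) ^ 2 = t * Real.exp (-2 * t) / m ^ 2 := by
    have e2 : Real.exp t ^ 2 = Real.exp (2 * t) := by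
      rw [← Real.exp_nat_mul]; norm_num
    rw [mul_pow, e2, neg_mul, Real.exp_neg]
    field_simp
  calc t / (w * Real.exp t + (1 - w) * Real.exp (-t)) ^ 2
      ≤ t / (m * Real.exp t) ^ 2 := step1
    _ = t * Real.exp (-2 * t) / m ^ 2 := step2
    _ ≤ Real.exp (-3 * a / 2) / m ^ 2 := by gcongr
end

section
/- For every real number w with 0 < w < 1, every real number b, and every real number t, |t² − b²|/(w·exp(t) + (1−w)·exp(−t))² ≤ (1 + b²)/(min{w, 1−w})². -/
/-- Global bound on `f₃(t) = (t² − b²)·(w·eᵗ + (1−w)·e^{−t})^{−2}`: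
for `w ∈ (0,1)`, any real `b` and all real `t`, `|f₃(t)| ≤ (1+b²)/(min{w,1−w})²`. -/
theorem f3_global_bound (w b t : ℝ) (hw0 : 0 < w) (hw1 : w < 1) :
    |t ^ 2 - b ^ 2| / (w * Real.exp t + (1 - w) * Real.exp (-t)) ^ 2
      ≤ (1 + b ^ 2) / (min w (1 - w)) ^ 2 := by
  set m := min w (1 - w) with hm
  have hm0 : 0 < m := lt_min hw0 (by linarith)
  have het : 0 < Real.exp t := Real.exp_pos t
  have hent : 0 < Real.exp (-t) := Real.exp_pos (-t)
  have hw2 : 0 < 1 - w := by linarith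
  have hD : 0 < w * Real.exp t + (1 - w) * Real.exp (-t) := by positivity
  have hmw : m ≤ w := min_le_left _ _
  have hmw' : m ≤ 1 - w := min_le_right _ _
  have hexpabs : Real.exp |t| ≤ Real.exp t + Real.exp (-t) := by
    rcases abs_cases t with ⟨h1, _⟩ | ⟨h1, _⟩ <;> rw [h1] <;> linarith
  have hDge : m * Real.exp |t| ≤ w * Real.exp t + (1 - w) * Real.exp (-t) := by
    have : m * Real.exp |t| ≤ m * (Real.exp t + Real.exp (-t)) := by
      exact mul_le_mul_of_nonneg_left hexpabs hm0.le
    nlinarith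
  have h1t : 1 + |t| ≤ Real.exp |t| := Real.add_one_le_exp _ |>.trans_eq' (by ring_nf)
  have habs : |t ^ 2 - b ^ 2| ≤ (1 + |t|) ^ 2 * (1 + b ^ 2) := by
    have h2 := abs_nonneg t
    have h3 : |t| ^ 2 = t ^ 2 := sq_abs t
    rcases abs_cases (t ^ 2 - b ^ 2) with ⟨h1, _⟩ | ⟨h1, _⟩ <;> rw [h1] <;> nlinarith
  rw [div_le_div_iff₀ (by positivity) (by positivity)]
  have hDsq : m ^ 2 * Real.exp |t| ^ 2 ≤ (w * Real.exp t + (1 - w) * Real.exp (-t)) ^ 2 := by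
    have := mul_self_le_mul_self (by positivity : (0:ℝ) ≤ m * Real.exp |t|) hDge
    nlinarith
  have h2' : (1 + |t|) ^ 2 ≤ Real.exp |t| ^ 2 := by
    have := mul_self_le_mul_self (by positivity : (0:ℝ) ≤ 1 + |t|) h1t
    nlinarith
  nlinarith [mul_le_mul_of_nonneg_right habs (sq_nonneg m),
    mul_le_mul_of_nonneg_left h2' (by positivity : (0:ℝ) ≤ (1 + b ^ 2) * m ^ 2),
    mul_le_mul_of_nonneg_left hDsq (by positivity : (0:ℝ) ≤ 1 + b ^ 2)]
end

section
/- For every real number w with 0 < w < 1, every real number b, every real number a ≥ 0, and every real number t with t ≥ a, |t² − b²|/(w·exp(t) + (1−w)·exp(−t))² ≤ (1 + b²)·exp(−a)/(min{w, 1−w})². -/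
/-- Tail bound on `f₃(t) = (t² − b²)·(w·eᵗ + (1−w)·e^{−t})^{−2}` over `[a, ∞)`:
for `w ∈ (0,1)`, any real `b`, `a ≥ 0` and `t ≥ a`,
`|f₃(t)| ≤ (1+b²)·exp(−a)/(min{w,1−w})²`. -/
theorem f3_tail_bound (w b a t : ℝ) (hw0 : 0 < w) (hw1 : w < 1)
    (ha : 0 ≤ a) (hta : a ≤ t) :
    |t ^ 2 - b ^ 2| / (w * Real.exp t + (1 - w) * Real.exp (-t)) ^ 2
      ≤ (1 + b ^ 2) * Real.exp (-a) / (min w (1 - w)) ^ 2 := by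
  have ht0 : 0 ≤ t := le_trans ha hta
  set m := min w (1 - w) with hm
  have hm0 : 0 < m := lt_min hw0 (by linarith)
  have hDle : m * Real.exp t ≤ w * Real.exp t + (1 - w) * Real.exp (-t) := by
    have h1 : m * Real.exp t ≤ w * Real.exp t :=
      mul_le_mul_of_nonneg_right (min_le_left _ _) (Real.exp_pos t).le
    have h2 : 0 ≤ (1 - w) * Real.exp (-t) :=
      mul_nonneg (by linarith) (Real.exp_pos _).le
    linarith
  have hmexp : 0 < m * Real.exp t := by positivity
  have hsq : (m * Real.exp t) ^ 2 ≤ (w * Real.exp t + (1 - w) * Real.exp (-t)) ^ 2 :=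
    pow_le_pow_left₀ hmexp.le hDle 2
  have hnum : |t ^ 2 - b ^ 2| ≤ t ^ 2 + b ^ 2 := by
    rw [abs_le]
    constructor <;> nlinarith [sq_nonneg t, sq_nonneg b]
  have hexp_t2 : t ^ 2 ≤ Real.exp t := by
    have h := Real.sum_le_exp_of_nonneg ht0 4
    norm_num [Finset.sum_range_succ, Nat.factorial] at h
    nlinarith [mul_nonneg ht0 (sq_nonneg (t - 2))]
  have step1 : |t ^ 2 - b ^ 2| / (w * Real.exp t + (1 - w) * Real.exp (-t)) ^ 2
      ≤ (t ^ 2 + b ^ 2) / (m * Real.exp t) ^ 2 :=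
    div_le_div₀ (by positivity) hnum (by positivity) hsq
  refine step1.trans ?_
  rw [div_le_div_iff₀ (by positivity) (by positivity)]
  have hexpa : Real.exp t ≤ Real.exp (-a) * Real.exp t ^ 2 := by
    rw [sq, ← Real.exp_add, ← Real.exp_add]
    exact Real.exp_le_exp.2 (by linarith)
  have hb : 0 ≤ b ^ 2 := sq_nonneg b
  have key : t ^ 2 + b ^ 2 ≤ (1 + b ^ 2) * (Real.exp (-a) * Real.exp t ^ 2) := by
    have hE2 : t ^ 2 ≤ Real.exp (-a) * Real.exp t ^ 2 := hexp_t2.trans hexpa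
    have hE1 : (1 : ℝ) ≤ Real.exp (-a) * Real.exp t ^ 2 :=
      (Real.one_le_exp ht0).trans hexpa
    nlinarith [mul_le_mul_of_nonneg_left hE1 hb]
  calc (t ^ 2 + b ^ 2) * m ^ 2
      ≤ ((1 + b ^ 2) * (Real.exp (-a) * Real.exp t ^ 2)) * m ^ 2 :=
        mul_le_mul_of_nonneg_right key (by positivity)
    _ = (1 + b ^ 2) * Real.exp (-a) * (m * Real.exp t) ^ 2 := by ring
end

section
/- Let d ≥ 1, let y, μ₀, μ₁ ∈ ℝᵈ, let Ω be a symmetric linear map on ℝᵈ, and let λ ∈ (0,1). With t = ⟨μ₀ − μ₁, Ω(y − (μ₀+μ₁)/2)⟩ and γ(μ₀,μ₁) = λ/(λ + (1−λ)·exp(t)), the gradient of γ with respect to μ₁ has Euclidean norm at most ‖Ω(y−μ₁)‖/4, and the gradient of γ with respect to μ₀ has Euclidean norm at most ‖Ω(y−μ₀)‖/4. -/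
open RealInnerProductSpace

variable {d : ℕ}

lemma quad_hasGradientAt (Ω : EuclideanSpace ℝ (Fin d) →ₗ[ℝ] EuclideanSpace ℝ (Fin d))
    (hΩ : Ω.IsSymmetric) (w x : EuclideanSpace ℝ (Fin d)) :
    HasGradientAt (fun z => ⟪z, Ω w⟫ - (1/2) * ⟪z, Ω z⟫) (Ω (w - x)) x := by
  have hsym : ∀ u v : EuclideanSpace ℝ (Fin d), ⟪u, Ω v⟫ = ⟪v, Ω u⟫ := fun u v => by
    rw [← hΩ u v, real_inner_comm]
  rw [hasGradientAt_iff_hasFDerivAt]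
  have hg : HasFDerivAt (fun z : EuclideanSpace ℝ (Fin d) => Ω w - (1/2 : ℝ) • Ω z)
      (0 - (1/2 : ℝ) • Ω.toContinuousLinearMap) x :=
    (hasFDerivAt_const (Ω w) x).sub ((Ω.toContinuousLinearMap.hasFDerivAt).const_smul (1/2 : ℝ))
  have h := (hasFDerivAt_id x).inner ℝ hg
  have hfe : (fun z : EuclideanSpace ℝ (Fin d) => ⟪z, Ω w⟫ - (1/2) * ⟪z, Ω z⟫) =
      fun z => ⟪id z, Ω w - (1/2 : ℝ) • Ω z⟫ := by
    funext z
    simp only [id_eq, inner_sub_right, inner_smul_right, smul_eq_mul]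
  rw [hfe]
  refine h.congr_fderiv ?_
  symm
  ext h'
  simp only [ContinuousLinearMap.comp_apply, ContinuousLinearMap.prod_apply, fderivInnerCLM_apply,
    ContinuousLinearMap.sub_apply, ContinuousLinearMap.zero_apply, ContinuousLinearMap.smul_apply,
    LinearMap.coe_toContinuousLinearMap', ContinuousLinearMap.id_apply, id_eq,
    InnerProductSpace.toDual_apply_apply, map_sub, inner_sub_left, inner_sub_right, inner_smul_right,
    smul_eq_mul, zero_sub, inner_neg_left, ContinuousLinearMap.neg_apply, inner_neg_right]
  rw [hsym x h', real_inner_comm (Ω w) h', real_inner_comm (Ω x) h']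
  ring

lemma g_hasDerivAt (l s : ℝ) (hl0 : 0 < l) (hl1 : l < 1) :
    HasDerivAt (fun s => l / (l + (1 - l) * Real.exp s))
      ((0 * (l + (1 - l) * Real.exp s) - l * ((1 - l) * Real.exp s)) /
        (l + (1 - l) * Real.exp s) ^ 2) s := by
  have he : HasDerivAt (fun s => l + (1 - l) * Real.exp s) ((1 - l) * Real.exp s) s := by
    simpa using ((Real.hasDerivAt_exp s).const_mul (1 - l)).const_add l
  have hne : l + (1 - l) * Real.exp s ≠ 0 := by
    have := Real.exp_pos s; nlinarith
  exact (hasDerivAt_const s l).div he hne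

lemma g_deriv_bound (l s : ℝ) (hl0 : 0 < l) (hl1 : l < 1) :
    |(0 * (l + (1 - l) * Real.exp s) - l * ((1 - l) * Real.exp s)) /
        (l + (1 - l) * Real.exp s) ^ 2| ≤ 1 / 4 := by
  have hE := Real.exp_pos s
  have hD : 0 < l + (1 - l) * Real.exp s := by nlinarith
  rw [abs_div, abs_of_nonneg (by positivity : (0:ℝ) ≤ (l + (1 - l) * Real.exp s) ^ 2),
    div_le_iff₀ (by positivity)]
  have : |0 * (l + (1 - l) * Real.exp s) - l * ((1 - l) * Real.exp s)|
      = l * ((1 - l) * Real.exp s) := by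
    rw [zero_mul, zero_sub, abs_neg, abs_of_nonneg (mul_nonneg hl0.le (mul_nonneg (by linarith) hE.le))]
  rw [this]
  nlinarith [sq_nonneg (l - (1 - l) * Real.exp s)]

/-- Norm bounds on the gradients of the two-component Gaussian-mixture responsibility
`γ(μ₀,μ₁) = λ/(λ + (1−λ)·exp(⟪μ₀−μ₁, Ω(y−(μ₀+μ₁)/2)⟫))` with respect to the component
means: `‖∇_{μ₁} γ‖ ≤ ‖Ω(y−μ₁)‖/4` and `‖∇_{μ₀} γ‖ ≤ ‖Ω(y−μ₀)‖/4`. -/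
theorem responsibility_gradient_norm_bounds (d : ℕ) (hd : 1 ≤ d)
    (y μ₀ μ₁ : EuclideanSpace ℝ (Fin d))
    (Ω : EuclideanSpace ℝ (Fin d) →ₗ[ℝ] EuclideanSpace ℝ (Fin d))
    (hΩ : Ω.IsSymmetric) (l : ℝ) (hl0 : 0 < l) (hl1 : l < 1)
    (t : EuclideanSpace ℝ (Fin d) → EuclideanSpace ℝ (Fin d) → ℝ)
    (ht : ∀ a b, t a b = ⟪a - b, Ω (y - (1 / 2 : ℝ) • (a + b))⟫)
    (γ : EuclideanSpace ℝ (Fin d) → EuclideanSpace ℝ (Fin d) → ℝ)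
    (hγ : ∀ a b, γ a b = l / (l + (1 - l) * Real.exp (t a b))) :
    ‖gradient (fun b => γ μ₀ b) μ₁‖ ≤ ‖Ω (y - μ₁)‖ / 4 ∧
    ‖gradient (fun a => γ a μ₁) μ₀‖ ≤ ‖Ω (y - μ₀)‖ / 4 := by
  have hsym : ∀ u v : EuclideanSpace ℝ (Fin d), ⟪u, Ω v⟫ = ⟪v, Ω u⟫ := fun u v => by
    rw [← hΩ u v, real_inner_comm]
  set Q : EuclideanSpace ℝ (Fin d) → ℝ := fun z => ⟪z, Ω y⟫ - (1/2) * ⟪z, Ω z⟫ with hQ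
  have htQ : ∀ a b, t a b = Q a - Q b := by
    intro a b
    rw [ht, hQ]
    simp only [map_sub, map_smul, map_add, inner_sub_left, inner_sub_right, inner_add_right,
      inner_smul_right, smul_eq_mul]
    rw [hsym a b]
    ring
  set g : ℝ → ℝ := fun s => l / (l + (1 - l) * Real.exp s) with hg
  constructor
  · -- gradient in the second variable
    set s₀ : ℝ := Q μ₀ - Q μ₁ with hs₀
    have hT : HasFDerivAt (fun b => Q μ₀ - Q b)
        (-(InnerProductSpace.toDual ℝ _ (Ω (y - μ₁)))) μ₁ := by
      have h0 := (hasFDerivAt_const (Q μ₀) μ₁).sub ((quad_hasGradientAt Ω hΩ y μ₁).hasFDerivAt)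
      rwa [zero_sub] at h0
    set c : ℝ := (0 * (l + (1 - l) * Real.exp s₀) - l * ((1 - l) * Real.exp s₀)) /
        (l + (1 - l) * Real.exp s₀) ^ 2 with hc
    have hchain : HasFDerivAt (fun b => g (Q μ₀ - Q b))
        (c • (-(InnerProductSpace.toDual ℝ _ (Ω (y - μ₁))))) μ₁ :=
      by have := (g_hasDerivAt l s₀ hl0 hl1).comp_hasFDerivAt μ₁ hT; exact this
    have hfun : (fun b => γ μ₀ b) = fun b => g (Q μ₀ - Q b) := by
      funext b; rw [hγ, htQ]
    have hclm : c • (-(InnerProductSpace.toDual ℝ (EuclideanSpace ℝ (Fin d)) (Ω (y - μ₁))))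
        = InnerProductSpace.toDual ℝ _ ((-c) • Ω (y - μ₁)) := by
      rw [map_smul]; rw [neg_smul, smul_neg]
    have hgrad : HasGradientAt (fun b => γ μ₀ b) ((-c) • Ω (y - μ₁)) μ₁ := by
      rw [hasGradientAt_iff_hasFDerivAt, ← hclm, hfun]
      exact hchain
    rw [hgrad.gradient, norm_smul, Real.norm_eq_abs, abs_neg]
    have hb := g_deriv_bound l s₀ hl0 hl1
    rw [← hc] at hb
    have := norm_nonneg (Ω (y - μ₁))
    calc |c| * ‖Ω (y - μ₁)‖ ≤ (1/4) * ‖Ω (y - μ₁)‖ := by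
          exact mul_le_mul_of_nonneg_right hb this
      _ = ‖Ω (y - μ₁)‖ / 4 := by ring
  · -- gradient in the first variable
    set s₀ : ℝ := Q μ₀ - Q μ₁ with hs₀
    have hT : HasFDerivAt (fun a => Q a - Q μ₁)
        (InnerProductSpace.toDual ℝ _ (Ω (y - μ₀))) μ₀ :=
      ((quad_hasGradientAt Ω hΩ y μ₀).hasFDerivAt).sub_const (Q μ₁)
    set c : ℝ := (0 * (l + (1 - l) * Real.exp s₀) - l * ((1 - l) * Real.exp s₀)) /
        (l + (1 - l) * Real.exp s₀) ^ 2 with hc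
    have hchain : HasFDerivAt (fun a => g (Q a - Q μ₁))
        (c • (InnerProductSpace.toDual ℝ _ (Ω (y - μ₀)))) μ₀ :=
      by have := (g_hasDerivAt l s₀ hl0 hl1).comp_hasFDerivAt μ₀ hT; exact this
    have hfun : (fun a => γ a μ₁) = fun a => g (Q a - Q μ₁) := by
      funext a; rw [hγ, htQ]
    have hgrad : HasGradientAt (fun a => γ a μ₁) (c • Ω (y - μ₀)) μ₀ := by
      rw [hasGradientAt_iff_hasFDerivAt, map_smul, hfun]
      exact hchain
    rw [hgrad.gradient, norm_smul, Real.norm_eq_abs]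
    have hb := g_deriv_bound l s₀ hl0 hl1
    rw [← hc] at hb
    have := norm_nonneg (Ω (y - μ₀))
    calc |c| * ‖Ω (y - μ₀)‖ ≤ (1/4) * ‖Ω (y - μ₀)‖ := by
          exact mul_le_mul_of_nonneg_right hb this
      _ = ‖Ω (y - μ₀)‖ / 4 := by ring
end

section
/- Let c₀ and c₁ be constants with 0 < c₀ < 1/2 and 1/2 < c₁ < 1, let Δ > 0, let w ∈ (c₀, 1−c₀), let δ be a real number with (1−c₁)·Δ² < |δ| < (1+c₁)·Δ², and let σ > 0 satisfy (1−c₁)·Δ² < σ² < (1+c₁)·Δ². Set c₄ = min{(1−c₁)/2, (1−c₁)²/(8·(1+c₁))}. Then ∫ℝ (w·exp(δ + σ·z) + (1−w)·exp(−(δ + σ·z)))^{−2} dγ(z) ≤ (2/c₀²)·exp(−c₄·Δ²), where γ is the standard Gaussian measure N(0,1) on ℝ. -/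
open MeasureTheory ProbabilityTheory
open scoped NNReal ENNReal

set_option maxHeartbeats 800000

lemma exp_mul_gaussianPDFReal (t x : ℝ) :
    Real.exp (t * x) * gaussianPDFReal 0 1 x
      = Real.exp (t ^ 2 / 2) * gaussianPDFReal t 1 x := by
  have h : Real.exp (t * x) * Real.exp (-(x - 0) ^ 2 / (2 * ((1 : ℝ≥0) : ℝ))) =
      Real.exp (t ^ 2 / 2) * Real.exp (-(x - t) ^ 2 / (2 * ((1 : ℝ≥0) : ℝ))) := by
    rw [← Real.exp_add, ← Real.exp_add]
    congr 1
    push_cast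
    ring
  unfold gaussianPDFReal
  rw [mul_left_comm, h, mul_left_comm]

lemma integrable_exp_gaussian (t : ℝ) :
    Integrable (fun z => Real.exp (t * z)) (gaussianReal 0 1) := by
  rw [ProbabilityTheory.gaussianReal_of_var_ne_zero _ one_ne_zero]
  have h : (gaussianPDF 0 1)
      = fun x => (((gaussianPDFReal 0 1 x).toNNReal : ℝ≥0) : ℝ≥0∞) := rfl
  rw [h, integrable_withDensity_iff_integrable_smul
      (measurable_gaussianPDFReal 0 1).real_toNNReal]
  have heq : (fun x => ((gaussianPDFReal 0 1 x).toNNReal : ℝ≥0) • Real.exp (t * x))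
      = fun x => Real.exp (t ^ 2 / 2) * gaussianPDFReal t 1 x := by
    ext x
    rw [NNReal.smul_def, smul_eq_mul, Real.coe_toNNReal _ (gaussianPDFReal_nonneg 0 1 x),
      mul_comm, exp_mul_gaussianPDFReal]
  rw [heq]
  exact (integrable_gaussianPDFReal t 1).const_mul _

lemma integral_exp_gaussian (t : ℝ) :
    ∫ z, Real.exp (t * z) ∂(gaussianReal 0 1) = Real.exp (t ^ 2 / 2) := by
  rw [ProbabilityTheory.gaussianReal_of_var_ne_zero _ one_ne_zero]
  have h : (gaussianPDF 0 1)
      = fun x => (((gaussianPDFReal 0 1 x).toNNReal : ℝ≥0) : ℝ≥0∞) := rfl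
  rw [h, integral_withDensity_eq_integral_smul
      (measurable_gaussianPDFReal 0 1).real_toNNReal]
  have heq : (fun x => ((gaussianPDFReal 0 1 x).toNNReal : ℝ≥0) • Real.exp (t * x))
      = fun x => Real.exp (t ^ 2 / 2) * gaussianPDFReal t 1 x := by
    ext x
    rw [NNReal.smul_def, smul_eq_mul, Real.coe_toNNReal _ (gaussianPDFReal_nonneg 0 1 x),
      mul_comm, exp_mul_gaussianPDFReal]
  rw [heq, integral_const_mul, integral_gaussianPDFReal_eq_one t one_ne_zero, mul_one]

/-- Key Gaussian expectation bound in the contraction of the population EM update of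
the mixing proportion: for `w ∈ (c₀, 1−c₀)` and `δ, σ²` in the contraction region,
`E[(w·e^{δ+σZ} + (1−w)·e^{−(δ+σZ)})^{−2}] ≤ (2/c₀²)·exp(−c₄·Δ²)` for `Z ∼ N(0,1)`. -/
theorem gaussian_responsibility_derivative_bound
    (c₀ c₁ Δ w δ σ c₄ : ℝ)
    (hc₀ : 0 < c₀) (hc₀' : c₀ < 1 / 2) (hc₁ : 1 / 2 < c₁) (hc₁' : c₁ < 1)
    (hΔ : 0 < Δ) (hw : c₀ < w) (hw' : w < 1 - c₀)
    (hδ : (1 - c₁) * Δ ^ 2 < |δ|) (hδ' : |δ| < (1 + c₁) * Δ ^ 2)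
    (hσ : 0 < σ) (hσ2 : (1 - c₁) * Δ ^ 2 < σ ^ 2) (hσ2' : σ ^ 2 < (1 + c₁) * Δ ^ 2)
    (hc₄ : c₄ = min ((1 - c₁) / 2) ((1 - c₁) ^ 2 / (8 * (1 + c₁)))) :
    ∫ z, ((w * Real.exp (δ + σ * z) + (1 - w) * Real.exp (-(δ + σ * z))) ^ 2)⁻¹
        ∂(gaussianReal 0 1)
      ≤ (2 / c₀ ^ 2) * Real.exp (-c₄ * Δ ^ 2) := by
  have hc₁0 : (0:ℝ) < 1 - c₁ := by linarith
  have hc₁1 : (0:ℝ) < 1 + c₁ := by linarith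
  have hΔ2 : (0:ℝ) < Δ ^ 2 := pow_pos hΔ 2
  have hδ0 : (0:ℝ) < |δ| := lt_trans (by positivity) hδ
  have hσ2pos : (0:ℝ) < σ ^ 2 := pow_pos hσ 2
  set l : ℝ := min 2 (|δ| / σ ^ 2) with hldef
  have hl0 : 0 < l := lt_min two_pos (div_pos hδ0 hσ2pos)
  have hl2 : l ≤ 2 := min_le_left _ _
  have hlσ : l * σ ^ 2 ≤ |δ| := by
    calc l * σ ^ 2 ≤ |δ| / σ ^ 2 * σ ^ 2 :=
          mul_le_mul_of_nonneg_right (min_le_right _ _) hσ2pos.le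
      _ = |δ| := div_mul_cancel₀ _ hσ2pos.ne'
  set a : ℝ := l * σ with hadef
  -- pointwise bound by the dominating function
  have hpt : ∀ z : ℝ,
      ((w * Real.exp (δ + σ * z) + (1 - w) * Real.exp (-(δ + σ * z))) ^ 2)⁻¹
      ≤ (c₀ ^ 2)⁻¹ * Real.exp (-(l * |δ|)) * (Real.exp (a * z) + Real.exp (-(a * z))) := by
    intro z
    set u : ℝ := δ + σ * z with hu
    have h1w : (0:ℝ) < 1 - w := by linarith
    have hs : c₀ * Real.exp |u| ≤ w * Real.exp u + (1 - w) * Real.exp (-u) := by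
      rcases abs_cases u with ⟨h1, _⟩ | ⟨h1, _⟩
      · rw [h1]; nlinarith [Real.exp_pos u, Real.exp_pos (-u)]
      · rw [h1]; nlinarith [Real.exp_pos u, Real.exp_pos (-u)]
    have hs2 : (c₀ * Real.exp |u|) ^ 2 ≤ (w * Real.exp u + (1 - w) * Real.exp (-u)) ^ 2 :=
      pow_le_pow_left₀ (by positivity) hs 2
    have hinv : ((w * Real.exp u + (1 - w) * Real.exp (-u)) ^ 2)⁻¹
        ≤ ((c₀ * Real.exp |u|) ^ 2)⁻¹ :=
      inv_anti₀ (by positivity) hs2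
    have heq : ((c₀ * Real.exp |u|) ^ 2)⁻¹ = (c₀ ^ 2)⁻¹ * Real.exp (-(2 * |u|)) := by
      rw [mul_pow, sq (Real.exp |u|), ← Real.exp_add, mul_inv, ← Real.exp_neg, two_mul]
    have habs : |δ| - σ * |z| ≤ |u| := by
      have h1 := abs_sub_abs_le_abs_sub δ (-(σ * z))
      rw [sub_neg_eq_add, abs_neg, abs_mul, abs_of_pos hσ] at h1
      rw [hu]
      linarith
    have hmono1 : Real.exp (-(2 * |u|)) ≤ Real.exp (-(l * |u|)) := by
      apply Real.exp_le_exp.mpr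
      have h2 : l * |u| ≤ 2 * |u| := mul_le_mul_of_nonneg_right hl2 (abs_nonneg u)
      linarith
    have hmono2 : Real.exp (-(l * |u|)) ≤ Real.exp (-(l * |δ|) + a * |z|) := by
      apply Real.exp_le_exp.mpr
      have h2 := mul_le_mul_of_nonneg_left habs hl0.le
      have h3 : l * (|δ| - σ * |z|) = l * |δ| - a * |z| := by rw [hadef]; ring
      linarith
    have hmono3 : Real.exp (a * |z|) ≤ Real.exp (a * z) + Real.exp (-(a * z)) := by
      rcases abs_cases z with ⟨h1, _⟩ | ⟨h1, _⟩
      · rw [h1]; linarith [Real.exp_pos (-(a * z))]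
      · rw [h1, mul_neg]; linarith [Real.exp_pos (a * z)]
    calc ((w * Real.exp u + (1 - w) * Real.exp (-u)) ^ 2)⁻¹
        ≤ ((c₀ * Real.exp |u|) ^ 2)⁻¹ := hinv
      _ = (c₀ ^ 2)⁻¹ * Real.exp (-(2 * |u|)) := heq
      _ ≤ (c₀ ^ 2)⁻¹ * Real.exp (-(l * |u|)) :=
          mul_le_mul_of_nonneg_left hmono1 (by positivity)
      _ ≤ (c₀ ^ 2)⁻¹ * Real.exp (-(l * |δ|) + a * |z|) :=
          mul_le_mul_of_nonneg_left hmono2 (by positivity)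
      _ = (c₀ ^ 2)⁻¹ * Real.exp (-(l * |δ|)) * Real.exp (a * |z|) := by
          rw [Real.exp_add]; ring
      _ ≤ (c₀ ^ 2)⁻¹ * Real.exp (-(l * |δ|)) * (Real.exp (a * z) + Real.exp (-(a * z))) :=
          mul_le_mul_of_nonneg_left hmono3 (by positivity)
  have hnegint : Integrable (fun z => Real.exp (-(a * z))) (gaussianReal 0 1) := by
    simpa [neg_mul] using integrable_exp_gaussian (-a)
  have hgint : Integrable (fun z =>
      (c₀ ^ 2)⁻¹ * Real.exp (-(l * |δ|)) * (Real.exp (a * z) + Real.exp (-(a * z))))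
      (gaussianReal 0 1) :=
    ((integrable_exp_gaussian a).add hnegint).const_mul _
  have hmain :
      ∫ z, ((w * Real.exp (δ + σ * z) + (1 - w) * Real.exp (-(δ + σ * z))) ^ 2)⁻¹
        ∂(gaussianReal 0 1)
      ≤ ∫ z, (c₀ ^ 2)⁻¹ * Real.exp (-(l * |δ|)) * (Real.exp (a * z) + Real.exp (-(a * z)))
        ∂(gaussianReal 0 1) :=
    integral_mono_of_nonneg (Filter.Eventually.of_forall fun z => by positivity) hgint
      (Filter.Eventually.of_forall hpt)
  have hnegval : ∫ z, Real.exp (-(a * z)) ∂(gaussianReal 0 1) = Real.exp (a ^ 2 / 2) := by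
    simpa [neg_mul, neg_sq] using integral_exp_gaussian (-a)
  have hg : ∫ z, (c₀ ^ 2)⁻¹ * Real.exp (-(l * |δ|)) * (Real.exp (a * z) + Real.exp (-(a * z)))
        ∂(gaussianReal 0 1)
      = (c₀ ^ 2)⁻¹ * Real.exp (-(l * |δ|)) * (2 * Real.exp (a ^ 2 / 2)) := by
    rw [integral_const_mul, integral_add (integrable_exp_gaussian a) hnegint,
      integral_exp_gaussian a, hnegval]
    ring
  -- exponent inequality
  have hcase : c₄ * Δ ^ 2 ≤ l * |δ| / 2 := by
    rcases min_cases 2 (|δ| / σ ^ 2) with ⟨he, _⟩ | ⟨he, _⟩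
    · have hc4 : c₄ ≤ (1 - c₁) / 2 := by rw [hc₄]; exact min_le_left _ _
      rw [hldef, he]
      nlinarith [mul_le_mul_of_nonneg_right hc4 hΔ2.le]
    · have hc4 : c₄ ≤ (1 - c₁) ^ 2 / (8 * (1 + c₁)) := by rw [hc₄]; exact min_le_right _ _
      rw [hldef, he]
      have e2 : |δ| / σ ^ 2 * |δ| / 2 = |δ| * |δ| / (σ ^ 2 * 2) := by
        rw [div_mul_eq_mul_div, div_div]
      have key : ((1 - c₁) * Δ ^ 2) * ((1 - c₁) * Δ ^ 2) / ((1 + c₁) * Δ ^ 2 * 2)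
          ≤ |δ| * |δ| / (σ ^ 2 * 2) := by
        apply div_le_div₀ (by positivity)
          (mul_le_mul hδ.le hδ.le (by positivity) (abs_nonneg δ))
          (by positivity) (by nlinarith)
      have simp1 : ((1 - c₁) * Δ ^ 2) * ((1 - c₁) * Δ ^ 2) / ((1 + c₁) * Δ ^ 2 * 2)
          = (1 - c₁) ^ 2 / (2 * (1 + c₁)) * Δ ^ 2 := by
        rw [div_mul_eq_mul_div, div_eq_div_iff (by positivity) (by positivity)]
        ring
      rw [simp1] at key
      have step : c₄ * Δ ^ 2 ≤ (1 - c₁) ^ 2 / (2 * (1 + c₁)) * Δ ^ 2 := by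
        apply mul_le_mul_of_nonneg_right _ hΔ2.le
        calc c₄ ≤ (1 - c₁) ^ 2 / (8 * (1 + c₁)) := hc4
          _ ≤ (1 - c₁) ^ 2 / (2 * (1 + c₁)) :=
            div_le_div_of_nonneg_left (by positivity) (by positivity) (by nlinarith)
      rw [e2]
      linarith
  have ha2 : a ^ 2 / 2 ≤ l * |δ| / 2 := by
    rw [hadef]
    nlinarith [mul_le_mul_of_nonneg_left hlσ hl0.le]
  have hexp : -(l * |δ|) + a ^ 2 / 2 ≤ -c₄ * Δ ^ 2 := by linarith
  calc ∫ z, ((w * Real.exp (δ + σ * z) + (1 - w) * Real.exp (-(δ + σ * z))) ^ 2)⁻¹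
        ∂(gaussianReal 0 1)
      ≤ ∫ z, (c₀ ^ 2)⁻¹ * Real.exp (-(l * |δ|)) * (Real.exp (a * z) + Real.exp (-(a * z)))
        ∂(gaussianReal 0 1) := hmain
    _ = (c₀ ^ 2)⁻¹ * Real.exp (-(l * |δ|)) * (2 * Real.exp (a ^ 2 / 2)) := hg
    _ = (2 / c₀ ^ 2) * Real.exp (-(l * |δ|) + a ^ 2 / 2) := by
        rw [Real.exp_add]; ring
    _ ≤ (2 / c₀ ^ 2) * Real.exp (-c₄ * Δ ^ 2) :=
        mul_le_mul_of_nonneg_left (Real.exp_le_exp.mpr hexp) (by positivity)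
end

section
/- For every real number w with 0 < w < 1, every real number δ, and every real number σ > 0, ∫ℝ (w·exp(δ + σ·z) + (1−w)·exp(−(δ + σ·z)))^{−2} dγ(z) ≤ (exp(−|δ|) + exp(−δ²/(8·σ²)))/(min{w, 1−w})², where γ is the standard Gaussian measure N(0,1) on ℝ. -/
open MeasureTheory ProbabilityTheory

private lemma gauss_ioi_tail (c : ℝ) (hc : 0 ≤ c) :
    ∫ x in Set.Ioi c, gaussianPDFReal 0 1 x ≤ Real.exp (-c^2/2) / 2 := by
  have hpdf : ∀ x, gaussianPDFReal 0 1 x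
      = (Real.sqrt (2 * Real.pi))⁻¹ * Real.exp (-x^2/2) := by
    intro x; simp [gaussianPDFReal]
  calc ∫ x in Set.Ioi c, gaussianPDFReal 0 1 x
      ≤ ∫ x in Set.Ioi c,
          (Real.sqrt (2*Real.pi))⁻¹ * (Real.exp (-c^2/2) * Real.exp (-(x-c)^2/2)) := by
        apply setIntegral_mono_on
        · exact (integrable_gaussianPDFReal 0 1).integrableOn
        · apply Integrable.integrableOn
          apply Integrable.const_mul
          apply Integrable.const_mul
          have : Integrable (fun x : ℝ => Real.exp (-(1/2) * x^2)) :=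
            integrable_exp_neg_mul_sq (by norm_num)
          have h2 := this.comp_sub_right c
          convert h2 using 2 with x
          ring_nf
        · exact measurableSet_Ioi
        · intro x hx
          rw [hpdf]
          have hxc : c ≤ x := le_of_lt hx
          rw [← Real.exp_add]
          gcongr
          nlinarith [sq_nonneg (x - c), sq_nonneg c]
    _ = (Real.sqrt (2*Real.pi))⁻¹ * Real.exp (-c^2/2)
          * ∫ x in Set.Ioi c, Real.exp (-(x-c)^2/2) := by
        rw [← integral_const_mul]; congr 1 with x; ring
    _ = (Real.sqrt (2*Real.pi))⁻¹ * Real.exp (-c^2/2)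
          * ∫ x in Set.Ioi (0:ℝ), Real.exp (-x^2/2) := by
        congr 1
        have h := (measurePreserving_add_right (volume : Measure ℝ) c).setIntegral_preimage_emb
          (measurableEmbedding_addRight c) (fun y => Real.exp (-(y - c)^2/2)) (Set.Ioi c)
        rw [← h]
        have hs : (· + c) ⁻¹' (Set.Ioi c) = Set.Ioi (0:ℝ) := by ext x; simp
        rw [hs]; simp
    _ = Real.exp (-c^2/2) / 2 := by
        have hint : ∫ x in Set.Ioi (0:ℝ), Real.exp (-x^2/2) = Real.sqrt (2*Real.pi) / 2 := by
          have h := integral_gaussian_Ioi (1/2)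
          have h' : ∀ x : ℝ, -(1/2 : ℝ) * x^2 = -x^2/2 := fun x => by ring
          simp_rw [h'] at h
          rw [h]
          congr 1
          rw [show Real.pi / (1/2) = 2 * Real.pi by ring]
        rw [hint]
        have h2π : (0:ℝ) < Real.sqrt (2*Real.pi) := Real.sqrt_pos.mpr (by positivity)
        field_simp

private lemma gauss_tail (c : ℝ) (hc : 0 ≤ c) :
    (gaussianReal 0 1) {z | c < |z|} ≤ ENNReal.ofReal (Real.exp (-c^2/2)) := by
  rw [gaussianReal_apply_eq_integral 0 one_ne_zero]
  apply ENNReal.ofReal_le_ofReal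
  have hset : {z : ℝ | c < |z|} = Set.Iio (-c) ∪ Set.Ioi c := by
    ext x
    simp only [Set.mem_setOf_eq, Set.mem_union, Set.mem_Iio, Set.mem_Ioi, lt_abs]
    constructor
    · rintro (h | h); exacts [Or.inr h, Or.inl (by linarith)]
    · rintro (h | h); exacts [Or.inr (by linarith), Or.inl h]
  rw [hset, setIntegral_union]
  · have hneg : ∫ x in Set.Iio (-c), gaussianPDFReal 0 1 x
        = ∫ x in Set.Ioi c, gaussianPDFReal 0 1 x := by
      have h := (Measure.measurePreserving_neg (volume : Measure ℝ)).setIntegral_preimage_emb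
        measurableEmbedding_neg (gaussianPDFReal 0 1) (Set.Iio (-c))
      rw [← h]
      have hs : (Neg.neg : ℝ → ℝ) ⁻¹' (Set.Iio (-c)) = Set.Ioi c := by ext x; simp
      rw [hs]
      congr 1 with x
      simp [gaussianPDFReal]
    rw [hneg]
    have := gauss_ioi_tail c hc
    linarith
  · rw [Set.disjoint_left]; intro x hx hx'
    simp only [Set.mem_Iio, Set.mem_Ioi] at hx hx'
    linarith
  · exact measurableSet_Ioi
  · exact (integrable_gaussianPDFReal 0 1).integrableOn
  · exact (integrable_gaussianPDFReal 0 1).integrableOn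

/-- Intermediate Gaussian expectation bound: for `w ∈ (0,1)`, any `δ` and `σ > 0`,
`E[(w·e^{δ+σZ} + (1−w)·e^{−(δ+σZ)})^{−2}]
  ≤ (exp(−|δ|) + exp(−δ²/(8σ²)))/(min{w,1−w})²` for `Z ∼ N(0,1)`. -/
theorem gaussian_f1_expectation_bound (w δ σ : ℝ)
    (hw0 : 0 < w) (hw1 : w < 1) (hσ : 0 < σ) :
    ∫ z, ((w * Real.exp (δ + σ * z) + (1 - w) * Real.exp (-(δ + σ * z))) ^ 2)⁻¹
        ∂(gaussianReal 0 1)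
      ≤ (Real.exp (-|δ|) + Real.exp (-δ ^ 2 / (8 * σ ^ 2))) / (min w (1 - w)) ^ 2 := by
  set m : ℝ := min w (1 - w) with hm_def
  have hm : 0 < m := lt_min hw0 (by linarith)
  set c : ℝ := |δ| / (2 * σ) with hc_def
  have hc : 0 ≤ c := by positivity
  set S : Set ℝ := {z | c < |z|} with hS_def
  have hS_meas : MeasurableSet S := measurableSet_lt measurable_const continuous_abs.measurable
  set f : ℝ → ℝ :=
    fun z => ((w * Real.exp (δ + σ * z) + (1 - w) * Real.exp (-(δ + σ * z))) ^ 2)⁻¹ with hf_def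
  set g : ℝ → ℝ := fun z => Real.exp (-|δ|) / m^2 + S.indicator (fun _ => 1/m^2) z with hg_def
  -- basic pointwise bound
  have hbound : ∀ t : ℝ, ((w * Real.exp t + (1-w) * Real.exp (-t))^2)⁻¹
      ≤ Real.exp (-(2*|t|)) / m^2 := by
    intro t
    have hD : m * Real.exp |t| ≤ w * Real.exp t + (1-w) * Real.exp (-t) := by
      rcases le_total 0 t with ht | ht
      · rw [abs_of_nonneg ht]
        nlinarith [Real.exp_pos t, Real.exp_pos (-t), min_le_left w (1-w)]
      · rw [abs_of_nonpos ht]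
        nlinarith [Real.exp_pos t, Real.exp_pos (-t), min_le_right w (1-w)]
    have hpos : 0 < m * Real.exp |t| := by positivity
    have h1 : (m * Real.exp |t|)^2 ≤ (w * Real.exp t + (1-w) * Real.exp (-t))^2 := by
      apply pow_le_pow_left₀ (le_of_lt hpos) hD
    have h2 : ((w * Real.exp t + (1-w) * Real.exp (-t))^2)⁻¹ ≤ ((m * Real.exp |t|)^2)⁻¹ := by
      apply inv_anti₀ (by positivity) h1
    refine h2.trans_eq ?_
    rw [mul_pow, show Real.exp |t| ^ 2 = Real.exp (2 * |t|) by
      rw [sq, ← Real.exp_add]; ring_nf]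
    rw [Real.exp_neg, mul_inv, div_eq_mul_inv]
    ring
  have hf_nonneg : ∀ z, 0 ≤ f z := fun z => by positivity
  have hf_le : ∀ z, f z ≤ Real.exp (-(2 * |δ + σ * z|)) / m^2 := fun z => hbound (δ + σ * z)
  have hf_le_one : ∀ z, f z ≤ 1 / m^2 := by
    intro z
    refine (hf_le z).trans ?_
    gcongr
    apply Real.exp_le_one_iff.mpr
    nlinarith [abs_nonneg (δ + σ * z)]
  -- pointwise comparison with g
  have hle : ∀ z, f z ≤ g z := by
    intro z
    by_cases hz : z ∈ S
    · rw [hg_def]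
      simp only [Set.indicator_of_mem hz]
      have := hf_le_one z
      have : (0:ℝ) ≤ Real.exp (-|δ|) / m^2 := by positivity
      linarith [hf_le_one z]
    · rw [hg_def]
      simp only [Set.indicator_of_notMem hz, add_zero]
      refine (hf_le z).trans ?_
      gcongr
      have hz' : |z| ≤ c := not_lt.mp hz
      have habs : |σ * z| ≤ |δ| / 2 := by
        rw [abs_mul, abs_of_pos hσ]
        calc σ * |z| ≤ σ * c := by nlinarith
          _ = |δ| / 2 := by rw [hc_def]; field_simp
      have htri : |δ| ≤ |δ + σ * z| + |σ * z| := by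
        calc |δ| = |(δ + σ * z) + (-(σ * z))| := by congr 1; ring
          _ ≤ |δ + σ * z| + |(-(σ * z))| := abs_add_le _ _
          _ = |δ + σ * z| + |σ * z| := by rw [abs_neg]
      linarith
  -- integrability
  have hf_cont : Continuous f := by
    apply Continuous.inv₀
    · fun_prop
    · intro z
      have h1 : 0 < w * Real.exp (δ + σ * z) + (1 - w) * Real.exp (-(δ + σ * z)) := by
        have := Real.exp_pos (δ + σ * z); have := Real.exp_pos (-(δ + σ * z)); nlinarith
      positivity
  have hf_int : Integrable f (gaussianReal 0 1) := by
    apply Integrable.mono' (integrable_const (1/m^2)) hf_cont.aestronglyMeasurable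
    filter_upwards with z
    rw [Real.norm_eq_abs, abs_of_nonneg (hf_nonneg z)]
    exact hf_le_one z
  have hg_int : Integrable g (gaussianReal 0 1) := by
    apply Integrable.add (integrable_const _)
    exact (integrable_const _).indicator hS_meas
  -- compute integral of g
  have hμS : ((gaussianReal 0 1) S).toReal ≤ Real.exp (-δ ^ 2 / (8 * σ ^ 2)) := by
    have h := gauss_tail c hc
    have hcsq : -c^2/2 = -δ ^ 2 / (8 * σ ^ 2) := by
      have h1 : c^2 = δ^2 / (4 * σ^2) := by
        rw [hc_def, div_pow, mul_pow, sq_abs]; norm_num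
      rw [h1]
      have hσ' : σ ≠ 0 := ne_of_gt hσ
      field_simp
      ring
    rw [hcsq] at h
    exact ENNReal.toReal_le_of_le_ofReal (Real.exp_nonneg _) h
  have hgint_eq : ∫ z, g z ∂(gaussianReal 0 1)
      = Real.exp (-|δ|) / m^2 + ((gaussianReal 0 1) S).toReal * (1/m^2) := by
    rw [hg_def, integral_add (integrable_const _) ((integrable_const _).indicator hS_meas)]
    rw [integral_const, integral_indicator_const _ hS_meas]
    simp [measure_univ, smul_eq_mul, Measure.real]
  calc ∫ z, f z ∂(gaussianReal 0 1) ≤ ∫ z, g z ∂(gaussianReal 0 1) :=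
        integral_mono hf_int hg_int hle
    _ = Real.exp (-|δ|) / m^2 + ((gaussianReal 0 1) S).toReal * (1/m^2) := hgint_eq
    _ ≤ (Real.exp (-|δ|) + Real.exp (-δ ^ 2 / (8 * σ ^ 2))) / m ^ 2 := by
        rw [add_div]
        have h2 := mul_le_mul_of_nonneg_right hμS
          (by positivity : (0:ℝ) ≤ 1/m^2)
        have he : Real.exp (-δ ^ 2 / (8 * σ ^ 2)) * (1/m^2)
            = Real.exp (-δ ^ 2 / (8 * σ ^ 2)) / m ^ 2 := by ring
        linarith
end
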